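/- arXiv:1405.6538 — 3 statements merged into one kernel-verified Lean document; each statement's English description precedes it below -/
import Mathlib

section
/- Let B be a unital C*-algebra (a complex C*-algebra with unit), let u ∈ B be a unitary, let n ≥ 1, and let V be a unitary n×n complex matrix. Define the n×n matrix W over B by W_{ij} = V_{ij} · u^{j−i+1} (integer powers of the invertible element u, indices i, j running from 1 to n). Then: (a) W is a unitary element of the C*-algebra of n×n matrices over B; (b) for every a ∈ B, W · diag(u^{−1} a u, u^{−2} a u², …, u^{−n} a u^{n}) · W* = diag(a, u^{−1} a u, …, u^{−(n−1)} a u^{n−1}). -/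
private lemma upow_mul {B : Type*} [CStarAlgebra B] (u : unitary B) (m p : ℤ) :
    ((u ^ m : unitary B) : B) * ((u ^ p : unitary B) : B) = ((u ^ (m + p) : unitary B) : B) := by
  simp [zpow_add]

private lemma upow_star {B : Type*} [CStarAlgebra B] (u : unitary B) (m : ℤ) :
    star ((u ^ m : unitary B) : B) = ((u ^ (-m) : unitary B) : B) := by
  rw [zpow_neg, ← Unitary.coe_star, Unitary.star_eq_inv]

/-- Let `B` be a unital C*-algebra, `u ∈ B` unitary, `n ≥ 1` and `V` a unitary
`n × n` complex matrix.  The matrix `W` with entries `W i j = V i j • u ^ (j - i + 1)` is a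
unitary element of `Mₙ(B)` and conjugation by `W` carries `diag (u⁻¹ a u, …, u⁻ⁿ a uⁿ)` to
`diag (a, u⁻¹ a u, …, u^{-(n-1)} a u^{n-1})` for every `a ∈ B`. -/
theorem schur_twisted_unitary_conj
    {B : Type*} [CStarAlgebra B] (u : unitary B) {n : ℕ} (hn : 1 ≤ n)
    (V : Matrix (Fin n) (Fin n) ℂ) (hV : V ∈ Matrix.unitaryGroup (Fin n) ℂ)
    (W : Matrix (Fin n) (Fin n) B)
    (hW : ∀ i j : Fin n, W i j = V i j • ((u ^ ((j : ℤ) - (i : ℤ) + 1) : unitary B) : B)) :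
    W ∈ unitary (Matrix (Fin n) (Fin n) B) ∧
      ∀ a : B,
        W * Matrix.diagonal
              (fun i : Fin n => ((u ^ (-((i : ℤ) + 1)) : unitary B) : B) * a *
                ((u ^ ((i : ℤ) + 1) : unitary B) : B)) * star W =
          Matrix.diagonal
            (fun i : Fin n => ((u ^ (-(i : ℤ)) : unitary B) : B) * a *
              ((u ^ ((i : ℤ)) : unitary B) : B)) := by
  have hV1 : star V * V = 1 := hV.1
  have hV2 : V * star V = 1 := hV.2
  have hsum2 : ∀ i k : Fin n, ∑ j : Fin n, V i j * star (V k j) = (1 : Matrix (Fin n) (Fin n) ℂ) i k := by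
    intro i k
    rw [← hV2, Matrix.mul_apply]
    simp [Matrix.star_apply]
  constructor
  · rw [Unitary.mem_iff]
    constructor
    · ext i k
      rw [Matrix.mul_apply]
      have hterm : ∀ j : Fin n, (star W) i j * W j k =
          (star (V j i) * V j k) • ((u ^ ((k : ℤ) - (i : ℤ)) : unitary B) : B) := by
        intro j
        rw [Matrix.star_apply, hW, hW, star_smul, upow_star, smul_mul_assoc, mul_smul_comm,
          smul_smul, upow_mul]
        congr 2
        ring_nf
      rw [Finset.sum_congr rfl fun j _ => hterm j, ← Finset.sum_smul]
      have : ∑ j : Fin n, star (V j i) * V j k = (1 : Matrix (Fin n) (Fin n) ℂ) i k := by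
        rw [← hV1, Matrix.mul_apply]
        simp [Matrix.star_apply]
      rw [this]
      by_cases h : i = k
      · subst h
        simp
      · simp [Matrix.one_apply_ne h]
    · ext i k
      rw [Matrix.mul_apply]
      have hterm : ∀ j : Fin n, W i j * (star W) j k =
          (V i j * star (V k j)) • ((u ^ ((k : ℤ) - (i : ℤ)) : unitary B) : B) := by
        intro j
        rw [Matrix.star_apply, hW, hW, star_smul, upow_star, smul_mul_assoc, mul_smul_comm,
          smul_smul, upow_mul]
        congr 2
        ring_nf
      rw [Finset.sum_congr rfl fun j _ => hterm j, ← Finset.sum_smul, hsum2]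
      by_cases h : i = k
      · subst h
        simp
      · simp [Matrix.one_apply_ne h]
  · intro a
    ext i k
    rw [Matrix.mul_apply]
    have hterm : ∀ j : Fin n,
        (W * Matrix.diagonal
          (fun i : Fin n => ((u ^ (-((i : ℤ) + 1)) : unitary B) : B) * a *
            ((u ^ ((i : ℤ) + 1) : unitary B) : B))) i j * (star W) j k =
        (V i j * star (V k j)) • (((u ^ (-(i : ℤ)) : unitary B) : B) * a *
          ((u ^ ((k : ℤ)) : unitary B) : B)) := by
      intro j
      rw [Matrix.mul_diagonal, Matrix.star_apply, hW, hW, star_smul, upow_star, smul_mul_assoc,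
        mul_smul_comm, smul_mul_assoc, smul_smul, mul_comm (star (V k j)) (V i j)]
      congr 1
      simp only [← mul_assoc]
      rw [upow_mul]
      rw [mul_assoc _ _ ((u ^ (-((j:ℤ) - (k:ℤ) + 1)) : unitary B) : B), upow_mul]
      congr 2 <;> ring_nf
    rw [Finset.sum_congr rfl fun j _ => hterm j, ← Finset.sum_smul, hsum2]
    by_cases h : i = k
    · subst h
      simp
    · simp [Matrix.one_apply_ne h, Matrix.diagonal_apply_ne _ h]
end

section
/- Let B be a unital C*-algebra, let u ∈ B be a unitary, and let n ≥ 1. Then there exists a continuous path t ↦ W_t, t ∈ [0,1], of unitary elements of the C*-algebra of n×n matrices over B such that: (a) W₀ is the companion-type matrix with (W₀)_{i+1,i} = 1 for 1 ≤ i ≤ n−1, (W₀)_{1,n} = u^n, and all other entries 0; (b) W₁ = diag(u, u, …, u); (c) for every t ∈ [0,1] and every a ∈ B, W_t · diag(u^{−1} a u, u^{−2} a u², …, u^{−n} a u^{n}) · W_t* = diag(a, u^{−1} a u, …, u^{−(n−1)} a u^{n−1}). -/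
open Complex Matrix
open Fin.NatCast


/-- Permutation matrix over ℂ: entry (i,j) is 1 iff σ j = i. -/
noncomputable def permMat (n : ℕ) (σ : Equiv.Perm (Fin n)) : Matrix (Fin n) (Fin n) ℂ :=
  fun i j => if σ j = i then 1 else 0

lemma permMat_mul (n : ℕ) (σ τ : Equiv.Perm (Fin n)) :
    permMat n σ * permMat n τ = permMat n (σ * τ) := by
  ext i j
  simp only [permMat, Matrix.mul_apply, Equiv.Perm.mul_apply]
  rw [Finset.sum_eq_single (τ j)]
  · simp; congr
  · intro k _ hk; simp [Ne.symm hk]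
  · simp

lemma permMat_one (n : ℕ) : permMat n 1 = 1 := by
  ext i j
  simp [permMat, Matrix.one_apply, eq_comm]

lemma star_permMat_swap (n : ℕ) (a b : Fin n) :
    star (permMat n (Equiv.swap a b)) = permMat n (Equiv.swap a b) := by
  ext i j
  simp only [Matrix.star_apply, permMat]
  have : Equiv.swap a b j = i ↔ Equiv.swap a b i = j := by
    constructor <;> intro h <;> simp [← h, Equiv.swap_apply_self]
  simp only [this]
  split <;> simp


/-- adjacent swap -/
noncomputable def sw (n : ℕ) [NeZero n] (k : ℕ) : Equiv.Perm (Fin n) :=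
  Equiv.swap ((k : Fin n)) (((k+1 : ℕ) : Fin n))

noncomputable def sigma (n : ℕ) [NeZero n] (m : ℕ) : Equiv.Perm (Fin n) :=
  (((List.range m).map (sw n)).prod)

lemma sigma_apply (n : ℕ) [NeZero n] (m : ℕ) (hm : m ≤ n - 1) (x : Fin n) :
    ((sigma n m x : Fin n) : ℕ) =
      if (x : ℕ) < m then (x : ℕ) + 1 else if (x : ℕ) = m then 0 else (x : ℕ) := by
  induction m generalizing x with
  | zero =>
    simp only [sigma, List.range_zero, List.map_nil, List.prod_nil, Equiv.Perm.coe_one, id_eq]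
    have : ¬ ((x:ℕ) < 0) := by omega
    rcases Nat.eq_zero_or_pos (x : ℕ) with h | h
    · simp [h]
    · rw [if_neg this, if_neg (by omega)]
  | succ m ih =>
    have hn1 : 1 ≤ n := Nat.one_le_iff_ne_zero.mpr (NeZero.ne n)
    have hmn : m + 1 < n := by omega
    have hm' : m ≤ n - 1 := by omega
    have hvm : (((m : ℕ) : Fin n) : ℕ) = m := Fin.val_cast_of_lt (by omega)
    have hvm1 : (((m + 1 : ℕ) : Fin n) : ℕ) = m + 1 := Fin.val_cast_of_lt hmn
    have hprod : sigma n (m+1) = sigma n m * sw n m := by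
      simp [sigma, List.range_succ]
    rw [hprod, Equiv.Perm.mul_apply]
    by_cases h1 : (x : ℕ) = m
    · have hx : x = ((m : ℕ) : Fin n) := by
        apply Fin.ext; rw [hvm, h1]
      rw [hx]
      rw [show (sw n m) ((m : ℕ) : Fin n) = (((m+1 : ℕ)) : Fin n) from Equiv.swap_apply_left _ _]
      rw [ih hm']
      rw [hvm1, hvm]
      rw [if_neg (by omega), if_neg (by omega), if_pos (by omega)]
    · by_cases h2 : (x : ℕ) = m + 1
      · have hx : x = ((m + 1 : ℕ) : Fin n) := by
          apply Fin.ext; rw [hvm1, h2]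
        rw [hx]
        rw [show (sw n m) ((m+1 : ℕ) : Fin n) = ((m : ℕ) : Fin n) from Equiv.swap_apply_right _ _]
        rw [ih hm', hvm, hvm1]
        rw [if_neg (by omega), if_pos rfl, if_neg (by omega), if_pos (by omega)]
      · have hx1 : x ≠ ((m : ℕ) : Fin n) := fun h => h1 (by rw [h, hvm])
        have hx2 : x ≠ ((m+1 : ℕ) : Fin n) := fun h => h2 (by rw [h, hvm1])
        rw [show (sw n m) x = x from Equiv.swap_apply_of_ne_of_ne hx1 hx2]
        rw [ih hm']
        by_cases h3 : (x : ℕ) < m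
        · rw [if_pos h3, if_pos (by omega)]
        · rw [if_neg h3, if_neg h1, if_neg (by omega), if_neg h2]


section rot
variable (n : ℕ) [NeZero n]


/-- rotation through the swap matrix -/
noncomputable def Rk (k : ℕ) (t : ℝ) : Matrix (Fin n) (Fin n) ℂ :=
  (Real.cos ((1-t)*(Real.pi/2)) : ℂ) • 1 +
    ((Real.sin ((1-t)*(Real.pi/2)) : ℂ) * Complex.I) • permMat n (sw n k)


lemma Rk_mem_unitary (k : ℕ) (t : ℝ) : Rk n k t ∈ unitary (Matrix (Fin n) (Fin n) ℂ) := by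
  set c : ℂ := (Real.cos ((1-t)*(Real.pi/2)) : ℂ) with hc
  set s : ℂ := (Real.sin ((1-t)*(Real.pi/2)) : ℂ) with hs
  set X := permMat n (sw n k) with hX
  have hX2 : X * X = 1 := by
    rw [hX, permMat_mul, sw, Equiv.swap_mul_self, permMat_one]
  have hXs : star X = X := star_permMat_swap n _ _
  have hstar : star (Rk n k t) = c • 1 - (s * Complex.I) • X := by
    rw [Rk, star_add, star_smul, star_smul, star_one, hXs]
    rw [show star c = c by rw [hc]; exact Complex.conj_ofReal _]
    rw [show star (s * Complex.I) = -(s * Complex.I) by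
      rw [star_mul', Complex.star_def, Complex.conj_I, hs, Complex.conj_ofReal]; ring]
    rw [neg_smul]; ring_nf
    abel
  have hR : Rk n k t = c • 1 + (s * Complex.I) • X := rfl
  have h2 : s * s + c * c = 1 := by
    have := Real.sin_sq_add_cos_sq ((1-t)*(Real.pi/2))
    rw [hc, hs]; norm_cast; nlinarith [this]
  have hcc : c * c - (s * Complex.I) * (s * Complex.I) = 1 := by
    linear_combination h2 - s * s * Complex.I_mul_I
  constructor
  · calc star (Rk n k t) * Rk n k t
        = (c * c - (s*Complex.I) * (s*Complex.I)) • (1 : Matrix (Fin n) (Fin n) ℂ)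
          + (c * (s*Complex.I) - (s*Complex.I) * c) • X := by
          rw [hstar, hR]
          simp only [sub_mul, mul_add, smul_mul_assoc, mul_smul_comm, one_mul, mul_one,
            hX2, smul_smul]
          module
      _ = 1 := by rw [hcc, show c * (s*Complex.I) - (s*Complex.I) * c = 0 by ring]; simp
  · calc Rk n k t * star (Rk n k t)
        = (c * c - (s*Complex.I) * (s*Complex.I)) • (1 : Matrix (Fin n) (Fin n) ℂ)
          + ((s*Complex.I) * c - c * (s*Complex.I)) • X := by
          rw [hstar, hR]
          simp only [mul_sub, add_mul, smul_mul_assoc, mul_smul_comm, one_mul, mul_one,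
            hX2, smul_smul]
          module
      _ = 1 := by rw [hcc, show (s*Complex.I) * c - c * (s*Complex.I) = 0 by ring]; simp
end rot



section V
variable (n : ℕ) [NeZero n]

noncomputable def Pm (t : ℝ) : Matrix (Fin n) (Fin n) ℂ :=
  (((List.range (n-1)).map (fun k => Rk n k t)).prod)

noncomputable def Vp (t : ℝ) : Matrix (Fin n) (Fin n) ℂ :=
  Complex.exp (((t - 1) * ((n-1 : ℕ) * (Real.pi/2)) : ℝ) * Complex.I) • Pm n t

lemma Pm_mem_unitary (t : ℝ) : Pm n t ∈ unitary (Matrix (Fin n) (Fin n) ℂ) := by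
  apply Submonoid.list_prod_mem
  intro x hx
  simp only [List.mem_map] at hx
  obtain ⟨k, -, rfl⟩ := hx
  exact Rk_mem_unitary n k t

lemma Vp_mem_unitary (t : ℝ) : Vp n t ∈ unitary (Matrix (Fin n) (Fin n) ℂ) := by
  have hP := Pm_mem_unitary n t
  rw [Unitary.mem_iff] at hP ⊢
  have hzz : star (Complex.exp (((t - 1) * ((n-1 : ℕ) * (Real.pi/2)) : ℝ) * Complex.I)) *
      Complex.exp (((t - 1) * ((n-1 : ℕ) * (Real.pi/2)) : ℝ) * Complex.I) = 1 := by
    rw [Complex.star_def, ← Complex.exp_conj,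
      show (starRingEnd ℂ) ((((t - 1) * ((n-1 : ℕ) * (Real.pi/2)) : ℝ) : ℂ) * Complex.I)
        = -((((t - 1) * ((n-1 : ℕ) * (Real.pi/2)) : ℝ) : ℂ) * Complex.I) by
          rw [_root_.map_mul, Complex.conj_ofReal, Complex.conj_I]; ring,
      ← Complex.exp_add, neg_add_cancel, Complex.exp_zero]
  constructor
  · rw [Vp, star_smul, smul_mul_smul_comm, hP.1, hzz, one_smul]
  · rw [Vp, star_smul, smul_mul_smul_comm, hP.2, mul_comm, hzz, one_smul]

lemma Vp_one : Vp n 1 = 1 := by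
  have : ∀ k, Rk n k 1 = 1 := by
    intro k; rw [Rk]; norm_num
  rw [Vp, Pm]
  simp [this, List.prod_eq_one]

lemma Pm_zero : Pm n 0 = Complex.I ^ (n-1) • permMat n (sigma n (n-1)) := by
  have h1 : ∀ k, Rk n k 0 = Complex.I • permMat n (sw n k) := by
    intro k; rw [Rk]; norm_num
  rw [Pm]
  simp only [h1]
  -- list scalar extraction
  have : ∀ m : ℕ, (((List.range m).map (fun k => Complex.I • permMat n (sw n k))).prod)
      = Complex.I ^ m • permMat n (sigma n m) := by
    intro m
    induction m with
    | zero => simp [sigma, permMat_one]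
    | succ m ih =>
      rw [List.range_succ, List.map_append, List.prod_append, ih]
      have : sigma n (m+1) = sigma n m * sw n m := by simp [sigma, List.range_succ]
      simp [this, ← permMat_mul, smul_mul_smul_comm, pow_succ, smul_smul]
      ring_nf
  exact this (n-1)

lemma Vp_zero : Vp n 0 = permMat n (sigma n (n-1)) := by
  rw [Vp, Pm_zero, smul_smul]
  have hI : Complex.I = Complex.exp ((Real.pi/2 : ℝ) * Complex.I) := by
    rw [Complex.exp_mul_I]
    rw [← Complex.ofReal_cos, ← Complex.ofReal_sin, Real.cos_pi_div_two, Real.sin_pi_div_two]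
    simp
  have hIpow : (Complex.I) ^ (n-1) =
      Complex.exp ((((n-1:ℕ) * (Real.pi/2) : ℝ)) * Complex.I) := by
    conv_lhs => rw [hI]
    rw [← Complex.exp_nat_mul]
    congr 1
    push_cast; ring
  have : Complex.exp (((0 - 1 : ℝ) * ((n-1 : ℕ) * (Real.pi/2)) : ℝ) * Complex.I) *
      Complex.I ^ (n-1) = 1 := by
    rw [hIpow, ← Complex.exp_add, ← Complex.exp_zero]
    congr 1
    push_cast
    ring
  rw [this, one_smul]

lemma Vp_continuous : Continuous (Vp n) := by
  rw [show Vp n = (fun t : ℝ => Complex.exp (((t - 1) * ((n-1 : ℕ) * (Real.pi/2)) : ℝ) * Complex.I)) •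
    (fun t => Pm n t) from rfl]
  apply Continuous.smul
  · apply Complex.continuous_exp.comp
    apply Continuous.mul _ continuous_const
    exact Complex.continuous_ofReal.comp (by continuity)
  · apply continuous_list_prod
    intro k hk
    apply Continuous.add
    · apply Continuous.fun_smul _ continuous_const
      exact Complex.continuous_ofReal.comp (by continuity)
    · apply Continuous.fun_smul _ continuous_const
      apply Continuous.mul _ continuous_const
      exact Complex.continuous_ofReal.comp (by continuity)
end V


noncomputable section StarUnitaryAux

variable {B : Type*} [CStarAlgebra B]

/-- integer powers of a unitary, coerced to the algebra -/
def uzp (u : unitary B) (k : ℤ) : B := ((u ^ k : unitary B) : B)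

lemma uzp_mul (u : unitary B) (x y : ℤ) : uzp u x * uzp u y = uzp u (x + y) := by
  rw [uzp, uzp, uzp, _root_.zpow_add]
  rfl

lemma uzp_zero (u : unitary B) : uzp u 0 = 1 := by
  rw [uzp, _root_.zpow_zero]; rfl

lemma uzp_star (u : unitary B) (x : ℤ) : star (uzp u x) = uzp u (-x) := by
  rw [uzp, uzp, _root_.zpow_neg, ← Unitary.star_eq_inv]
  rfl

lemma uzp_sandwich (u : unitary B) (x y z w : ℤ) (a : B) :
    uzp u x * (uzp u y * a * uzp u z) * uzp u w = uzp u (x + y) * a * uzp u (z + w) := by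
  rw [← uzp_mul u x y, ← uzp_mul u z w]
  simp only [mul_assoc]

end StarUnitaryAux




/-- Let `B` be a unital C*-algebra, `u ∈ B` unitary and `n ≥ 1`.  There is a
continuous path `t ↦ W t`, `t ∈ [0, 1]`, of unitaries in `Mₙ(B)` from the companion-type
matrix (with `1`s below the diagonal and `u ^ n` in the upper right corner) to
`diag (u, …, u)` such that conjugation by every `W t` carries
`diag (u⁻¹ a u, …, u⁻ⁿ a uⁿ)` to `diag (a, u⁻¹ a u, …, u^{-(n-1)} a u^{n-1})` for all
`a ∈ B`.  (Indices are `0`-based.) -/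
theorem exists_unitary_path_companion_to_diagonal
    {B : Type*} [CStarAlgebra B] (u : unitary B) {n : ℕ} (hn : 1 ≤ n) :
    ∃ W : ℝ → Matrix (Fin n) (Fin n) B,
      ContinuousOn W (Set.Icc 0 1) ∧
      (∀ i j : Fin n, W 0 i j =
        if (i : ℕ) = (j : ℕ) + 1 then 1
        else if (i : ℕ) = 0 ∧ (j : ℕ) = n - 1 then ((u ^ n : unitary B) : B)
        else 0) ∧
      W 1 = Matrix.diagonal (fun _ : Fin n => (u : B)) ∧
      ∀ t ∈ Set.Icc (0 : ℝ) 1,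
        W t ∈ unitary (Matrix (Fin n) (Fin n) B) ∧
        ∀ a : B,
          W t * Matrix.diagonal
                (fun i : Fin n => ((u ^ (-((i : ℤ) + 1)) : unitary B) : B) * a *
                  ((u ^ ((i : ℤ) + 1) : unitary B) : B)) * star (W t) =
            Matrix.diagonal
              (fun i : Fin n => ((u ^ (-(i : ℤ)) : unitary B) : B) * a *
                ((u ^ ((i : ℤ)) : unitary B) : B)) := by
  haveI : NeZero n := ⟨by omega⟩
  refine ⟨fun t => Matrix.of fun i j => (Vp n t i j) • uzp u ((j : ℤ) - (i : ℤ) + 1),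
    ?_, ?_, ?_, ?_⟩
  · -- continuity
    apply Continuous.continuousOn
    apply continuous_matrix
    intro i j
    exact (((continuous_apply j).comp ((continuous_apply i).comp
      (Vp_continuous n)))).smul continuous_const
  · -- W 0
    intro i j
    show (Vp n 0 i j) • uzp u ((j : ℤ) - (i : ℤ) + 1) = _
    rw [Vp_zero]
    have hσ := sigma_apply n (n-1) le_rfl j
    by_cases hj : (j : ℕ) < n - 1
    · rw [if_pos hj] at hσ
      by_cases hi : (i : ℕ) = (j : ℕ) + 1
      · have h1 : sigma n (n-1) j = i := by
          apply Fin.ext; rw [hσ, hi]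
        rw [if_pos hi, permMat, if_pos h1, one_smul]
        have h' : (i : ℤ) = (j : ℤ) + 1 := by exact_mod_cast congrArg (Nat.cast : ℕ → ℤ) hi
        rw [show ((j : ℤ) - (i : ℤ) + 1) = 0 by rw [h']; ring, uzp_zero]
      · have h1 : sigma n (n-1) j ≠ i := by
          intro h
          exact hi (by rw [← h, hσ])
        rw [if_neg hi, permMat, if_neg h1, zero_smul,
          if_neg (by rintro ⟨-, h2⟩; omega)]
    · have hjn := j.isLt
      have hj' : (j : ℕ) = n - 1 := by omega
      rw [if_neg hj, if_pos hj'] at hσ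
      by_cases hi0 : (i : ℕ) = 0
      · have h1 : sigma n (n-1) j = i := by
          apply Fin.ext; rw [hσ, hi0]
        have hin := i.isLt
        rw [permMat, if_pos h1, one_smul, if_neg (by omega), if_pos ⟨hi0, hj'⟩]
        rw [show ((j : ℤ) - (i : ℤ) + 1) = (n : ℤ) from by
          have h2 : ((j:ℕ):ℤ) - ((i:ℕ):ℤ) + 1 = (n:ℤ) := by omega
          exact_mod_cast h2]
        rw [uzp, zpow_natCast]
      · have h1 : sigma n (n-1) j ≠ i := by
          intro h
          exact hi0 (by rw [← h, hσ])
        have hin := i.isLt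
        rw [permMat, if_neg h1, zero_smul, if_neg (by omega),
          if_neg (by rintro ⟨h2, -⟩; exact hi0 h2)]
  · -- W 1
    ext i j
    show (Vp n 1 i j) • uzp u ((j : ℤ) - (i : ℤ) + 1) = _
    rw [Vp_one]
    by_cases h : i = j
    · subst h
      rw [Matrix.one_apply_eq, Matrix.diagonal_apply_eq]
      rw [show ((i : ℤ) - (i : ℤ) + 1) = 1 by ring, one_smul]
      show ((u ^ (1:ℤ) : unitary B) : B) = (u : B)
      rw [zpow_one]
    · rw [Matrix.one_apply_ne h, zero_smul, Matrix.diagonal_apply_ne _ h]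
  · -- unitarity and conjugation
    intro t _
    have hU := Vp_mem_unitary n t
    rw [Unitary.mem_iff] at hU
    set V := Vp n t with hV
    have hVsum2 : ∀ i k : Fin n, (∑ j, V i j * star (V k j)) = if i = k then 1 else 0 := by
      intro i k
      have h := congrFun (congrFun hU.2 i) k
      rw [Matrix.mul_apply] at h
      simp only [Matrix.star_apply] at h
      rw [h, Matrix.one_apply]
    have hVsum1 : ∀ i k : Fin n, (∑ j, star (V j i) * V j k) = if i = k then 1 else 0 := by
      intro i k
      have h := congrFun (congrFun hU.1 i) k
      rw [Matrix.mul_apply] at h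
      simp only [Matrix.star_apply] at h
      rw [h, Matrix.one_apply]
    constructor
    · -- W t unitary
      rw [Unitary.mem_iff]
      constructor
      · ext i k
        show (star _ * _ : Matrix (Fin n) (Fin n) B) i k = _
        rw [Matrix.mul_apply]
        calc ∑ j, star ((fun t => Matrix.of fun i j => (Vp n t i j) • uzp u ((j : ℤ) - (i : ℤ) + 1)) t) i j *
              ((fun t => Matrix.of fun i j => (Vp n t i j) • uzp u ((j : ℤ) - (i : ℤ) + 1)) t) j k
            = ∑ j : Fin n, (star (V j i) * V j k) • uzp u ((k : ℤ) - (i : ℤ)) := by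
              apply Finset.sum_congr rfl
              intro j _
              show star ((V j i) • uzp u ((i : ℤ) - (j : ℤ) + 1)) *
                ((V j k) • uzp u ((k : ℤ) - (j : ℤ) + 1)) = _
              rw [star_smul, uzp_star, smul_mul_smul_comm, uzp_mul,
                show (-((i : ℤ) - (j : ℤ) + 1) + ((k : ℤ) - (j : ℤ) + 1)) = (k : ℤ) - (i : ℤ) by ring]
          _ = (∑ j, star (V j i) * V j k) • uzp u ((k : ℤ) - (i : ℤ)) := by
              rw [Finset.sum_smul]
          _ = (1 : Matrix (Fin n) (Fin n) B) i k := by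
              rw [hVsum1, Matrix.one_apply]
              by_cases h : i = k
              · subst h
                simp [show ((i:ℤ) - (i:ℤ)) = 0 by ring, uzp_zero]
              · simp [h]
      · ext i k
        show (_ * star _ : Matrix (Fin n) (Fin n) B) i k = _
        rw [Matrix.mul_apply]
        calc ∑ j, ((fun t => Matrix.of fun i j => (Vp n t i j) • uzp u ((j : ℤ) - (i : ℤ) + 1)) t) i j *
              star ((fun t => Matrix.of fun i j => (Vp n t i j) • uzp u ((j : ℤ) - (i : ℤ) + 1)) t) j k
            = ∑ j : Fin n, (V i j * star (V k j)) • uzp u ((k : ℤ) - (i : ℤ)) := by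
              apply Finset.sum_congr rfl
              intro j _
              rw [Matrix.star_apply]
              show ((V i j) • uzp u ((j : ℤ) - (i : ℤ) + 1)) *
                star ((V k j) • uzp u ((j : ℤ) - (k : ℤ) + 1)) = _
              rw [star_smul, uzp_star, smul_mul_smul_comm, uzp_mul,
                show (((j : ℤ) - (i : ℤ) + 1) + -((j : ℤ) - (k : ℤ) + 1)) = (k : ℤ) - (i : ℤ) by ring]
          _ = (∑ j, V i j * star (V k j)) • uzp u ((k : ℤ) - (i : ℤ)) := by
              rw [Finset.sum_smul]
          _ = (1 : Matrix (Fin n) (Fin n) B) i k := by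
              rw [hVsum2, Matrix.one_apply]
              by_cases h : i = k
              · subst h
                simp [show ((i:ℤ) - (i:ℤ)) = 0 by ring, uzp_zero]
              · simp [h]
    · -- conjugation
      intro a
      ext i k
      rw [Matrix.mul_apply]
      calc ∑ j, ((fun t => Matrix.of fun i j => (Vp n t i j) • uzp u ((j : ℤ) - (i : ℤ) + 1)) t *
              Matrix.diagonal (fun i : Fin n => ((u ^ (-((i : ℤ) + 1)) : unitary B) : B) * a *
                ((u ^ ((i : ℤ) + 1) : unitary B) : B))) i j *
            star ((fun t => Matrix.of fun i j => (Vp n t i j) • uzp u ((j : ℤ) - (i : ℤ) + 1)) t) j k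
          = ∑ j : Fin n, (V i j * star (V k j)) •
              (uzp u (-(i : ℤ)) * a * uzp u (k : ℤ)) := by
            apply Finset.sum_congr rfl
            intro j _
            rw [Matrix.mul_diagonal, Matrix.star_apply]
            show ((V i j) • uzp u ((j : ℤ) - (i : ℤ) + 1)) *
                (uzp u (-((j : ℤ) + 1)) * a * uzp u ((j : ℤ) + 1)) *
                star ((V k j) • uzp u ((j : ℤ) - (k : ℤ) + 1)) = _
            rw [star_smul, uzp_star, smul_mul_assoc, smul_mul_smul_comm, uzp_sandwich,
              show (((j : ℤ) - (i : ℤ) + 1) + -((j : ℤ) + 1)) = -(i : ℤ) by ring,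
              show (((j : ℤ) + 1) + -((j : ℤ) - (k : ℤ) + 1)) = (k : ℤ) by ring]
        _ = (∑ j, V i j * star (V k j)) • (uzp u (-(i : ℤ)) * a * uzp u (k : ℤ)) := by
            rw [Finset.sum_smul]
        _ = Matrix.diagonal (fun i : Fin n => ((u ^ (-(i : ℤ)) : unitary B) : B) * a *
              ((u ^ ((i : ℤ)) : unitary B) : B)) i k := by
            rw [hVsum2, Matrix.diagonal_apply]
            by_cases h : i = k
            · subst h
              rw [if_pos rfl, if_pos rfl, one_smul]
              rfl
            · rw [if_neg h, if_neg h, zero_smul]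
end

section
/- Let n ≥ 2, set m = ⌊n/2⌋, and let κ_n be the n×n complex matrix with entries (κ_n)_{ij} = min{i, j, n+1−i, n+1−j} / (m+1) (indices 1 ≤ i, j ≤ n). Then for every C*-algebra A, the Schur multiplication map x ↦ κ_n ∗ x on the C*-algebra of n×n matrices over A is positive (it sends positive elements to positive elements) and contractive (‖κ_n ∗ x‖ ≤ ‖x‖ for all x). -/
set_option maxHeartbeats 1600000


/-- The norm of a vector in the Hilbert `A`-module `Aⁿ`. -/
noncomputable def vecNorm {A : Type*} [NonUnitalCStarAlgebra A] {n : ℕ} (v : Fin n → A) : ℝ :=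
  Real.sqrt ‖∑ i, star (v i) * v i‖

/-- The C*-norm on `n × n` matrices over a C*-algebra `A`: the operator norm of the natural
action of a matrix on the Hilbert `A`-module `Aⁿ`. -/
noncomputable def cstarMatrixNorm {A : Type*} [NonUnitalCStarAlgebra A] {n : ℕ}
    (z : Matrix (Fin n) (Fin n) A) : ℝ :=
  sInf {c : ℝ | 0 ≤ c ∧ ∀ v : Fin n → A, vecNorm (z.mulVec v) ≤ c * vecNorm v}


open scoped InnerProductSpace WithCStarModule
noncomputable section
namespace SchurKappaAux

variable {A : Type*} [NonUnitalCStarAlgebra A] {n : ℕ}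

noncomputable instance instUPO : PartialOrder (Unitization ℂ A) := CStarAlgebra.spectralOrder _
noncomputable instance instUSOR : StarOrderedRing (Unitization ℂ A) :=
  CStarAlgebra.spectralOrderedRing _

/-- `inr` as a `ℂ`-linear map. -/
def inrL (A : Type*) [NonUnitalCStarAlgebra A] : A →ₗ[ℂ] Unitization ℂ A where
  toFun := Unitization.inr
  map_add' := Unitization.inr_add ℂ
  map_smul' c a := by simp [Unitization.inr_smul]

def ιvL (n : ℕ) (A : Type*) [NonUnitalCStarAlgebra A] :
    (Fin n → A) →+ C⋆ᵐᵒᵈ(Unitization ℂ A, Fin n → Unitization ℂ A) where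
  toFun v := (WithCStarModule.equiv _ _).symm fun i => star ((v i : A) : Unitization ℂ A)
  map_zero' := (WithCStarModule.equiv _ _).injective (funext fun i => by
    change star (((0 : A)) : Unitization ℂ A) = 0
    rw [Unitization.inr_zero, star_zero])
  map_add' v w := (WithCStarModule.equiv _ _).injective (funext fun i => by
    change star (((v i + w i : A)) : Unitization ℂ A)
      = star ((v i : A) : Unitization ℂ A) + star ((w i : A) : Unitization ℂ A)
    rw [Unitization.inr_add, star_add])

lemma ιvL_apply (v : Fin n → A) (i : Fin n) :
    ιvL n A v i = star ((v i : A) : Unitization ℂ A) := rfl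

lemma inr_sum {σ : Type*} (s : Finset σ) (f : σ → A) :
    ((∑ i ∈ s, f i : A) : Unitization ℂ A) = ∑ i ∈ s, (f i : Unitization ℂ A) :=
  map_sum (Unitization.inrNonUnitalAlgHom ℂ A) f s

lemma vecNorm_eq (v : Fin n → A) : vecNorm v = ‖ιvL n A v‖ := by
  rw [vecNorm, WithCStarModule.pi_norm, ← Unitization.norm_inr (𝕜 := ℂ), inr_sum]
  congr 2
  refine Finset.sum_congr rfl fun i _ => ?_
  rw [WithCStarModule.inner_def, ιvL_apply, star_star, Unitization.inr_mul, Unitization.inr_star]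


lemma vecNorm_nonneg (v : Fin n → A) : 0 ≤ vecNorm v := Real.sqrt_nonneg _

lemma norm_sum_star_mul_self_mono (v : Fin n → A) (s : Finset (Fin n)) :
    ‖∑ i ∈ s, star (v i) * v i‖ ≤ ‖∑ i, star (v i) * v i‖ := by
  rw [← Unitization.norm_inr (𝕜 := ℂ) (∑ i ∈ s, star (v i) * v i),
    ← Unitization.norm_inr (𝕜 := ℂ) (∑ i, star (v i) * v i), inr_sum, inr_sum]
  have hterm : ∀ i : Fin n, (0 : Unitization ℂ A) ≤ ((star (v i) * v i : A) : Unitization ℂ A) := by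
    intro i
    rw [Unitization.inr_mul, Unitization.inr_star]
    exact star_mul_self_nonneg _
  refine CStarAlgebra.norm_le_norm_of_nonneg_of_le
    (Finset.sum_nonneg fun i _ => hterm i) ?_
  exact Finset.sum_le_sum_of_subset_of_nonneg (Finset.subset_univ s) fun i _ _ => hterm i

lemma vecNorm_mask (P : Fin n → Prop) [DecidablePred P] (v : Fin n → A) :
    vecNorm (fun i => if P i then v i else 0) ≤ vecNorm v := by
  unfold vecNorm
  apply Real.sqrt_le_sqrt
  have : ∑ i, star (if P i then v i else 0) * (if P i then v i else 0)
      = ∑ i ∈ Finset.univ.filter P, star (v i) * v i := by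
    rw [Finset.sum_filter]
    refine Finset.sum_congr rfl fun i _ => ?_
    split <;> simp
  rw [this]
  exact norm_sum_star_mul_self_mono v _

lemma norm_apply_le_vecNorm (v : Fin n → A) (j : Fin n) : ‖v j‖ ≤ vecNorm v := by
  have h := norm_sum_star_mul_self_mono v {j}
  rw [Finset.sum_singleton] at h
  have h2 : ‖v j‖ = Real.sqrt ‖star (v j) * v j‖ := by
    rw [CStarRing.norm_star_mul_self, Real.sqrt_mul_self (norm_nonneg _)]
  rw [h2, vecNorm]
  exact Real.sqrt_le_sqrt h

lemma vecNorm_le_sum_norm (v : Fin n → A) : vecNorm v ≤ ∑ i, ‖v i‖ := by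
  rw [vecNorm_eq]
  refine (WithCStarModule.pi_norm_le_sum_norm _).trans ?_
  refine le_of_eq (Finset.sum_congr rfl fun i _ => ?_)
  rw [ιvL_apply, norm_star, Unitization.norm_inr]

lemma vecNorm_sum_le {σ : Type*} (s : Finset σ) (f : σ → Fin n → A) :
    vecNorm (∑ k ∈ s, f k) ≤ ∑ k ∈ s, vecNorm (f k) := by
  simp only [vecNorm_eq, map_sum]
  exact norm_sum_le _ _

lemma vecNorm_smul (c : ℂ) (v : Fin n → A) : vecNorm (c • v) = ‖c‖ * vecNorm v := by
  rw [vecNorm_eq, vecNorm_eq]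
  have h : ιvL n A (c • v) = (starRingEnd ℂ c) • ιvL n A v :=
    (WithCStarModule.equiv _ _).injective (funext fun i => by
      change star (((c • v i : A)) : Unitization ℂ A)
        = starRingEnd ℂ c • star ((v i : A) : Unitization ℂ A)
      rw [Unitization.inr_smul, star_smul]; rfl)
  rw [h, norm_smul, Complex.norm_conj]


/-- `min (i+1) (n-i)`, the "depth" of index `i`. -/
def am (n : ℕ) (p : Fin n) : ℕ := min ((p : ℕ) + 1) (n - (p : ℕ))

lemma am_le (p : Fin n) : am n p ≤ n / 2 + 1 := by
  have := p.isLt; unfold am; omega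

lemma sum_ite_count {β : Type*} [AddCommMonoid β] {K M : ℕ} (h : M ≤ K) (y : β) :
    ∑ k ∈ Finset.range K, (if k < M then y else 0) = M • y := by
  rw [← Finset.sum_subset (Finset.range_subset_range.mpr h)
      (fun k _ hk => if_neg (fun h' => hk (Finset.mem_range.mpr h'))),
    Finset.sum_congr rfl (fun k hk => if_pos (Finset.mem_range.mp hk)),
    Finset.sum_const, Finset.card_range]

lemma mulVec_schur_decomp (κ : Matrix (Fin n) (Fin n) ℂ)
    (hκ : ∀ i j : Fin n, κ i j =
      ((min (min ((i : ℕ) + 1) ((j : ℕ) + 1)) (min (n - (i : ℕ)) (n - (j : ℕ))) : ℕ) : ℂ) /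
        ((n / 2 : ℕ) + 1 : ℕ))
    (x : Matrix (Fin n) (Fin n) A) (v : Fin n → A) :
    (Matrix.of fun i j => κ i j • x i j).mulVec v =
      ∑ k ∈ Finset.range (n / 2 + 1), (((n / 2 + 1 : ℕ) : ℂ))⁻¹ •
        (fun i => if k < am n i then
          (x.mulVec fun j => if k < am n j then v j else 0) i else 0) := by
  funext i
  rw [Finset.sum_apply]
  simp only [Pi.smul_apply]
  have hk : ∀ k : ℕ, (∑ j, if k < min (am n i) (am n j) then x i j * v j else 0)
      = (if k < am n i then (x.mulVec fun j => if k < am n j then v j else 0) i else 0) := by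
    intro k
    by_cases h : k < am n i
    · rw [if_pos h, Matrix.mulVec, dotProduct]
      refine Finset.sum_congr rfl fun j _ => ?_
      rw [mul_ite, mul_zero]
      exact if_congr (by rw [lt_min_iff]; exact ⟨fun hh => hh.2, fun hh => ⟨h, hh⟩⟩) rfl rfl
    · rw [if_neg h]
      refine Finset.sum_eq_zero fun j _ => if_neg (fun h' => h ((lt_min_iff.mp h').1))
  calc (Matrix.of fun i j => κ i j • x i j).mulVec v i
      = ∑ j, ((n / 2 + 1 : ℕ) : ℂ)⁻¹ • ((min (am n i) (am n j)) • (x i j * v j)) := by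
        rw [Matrix.mulVec, dotProduct]
        refine Finset.sum_congr rfl fun j _ => ?_
        rw [Matrix.of_apply, hκ i j, smul_mul_assoc]
        have hmin : min (min ((i : ℕ) + 1) ((j : ℕ) + 1)) (min (n - (i : ℕ)) (n - (j : ℕ)))
            = min (am n i) (am n j) := by unfold am; omega
        rw [hmin, div_eq_inv_mul, mul_smul, Nat.cast_smul_eq_nsmul]
    _ = ∑ j, ∑ k ∈ Finset.range (n / 2 + 1), ((n / 2 + 1 : ℕ) : ℂ)⁻¹ •
          (if k < min (am n i) (am n j) then x i j * v j else 0) := by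
        refine Finset.sum_congr rfl fun j _ => ?_
        rw [← Finset.smul_sum, sum_ite_count (le_trans (min_le_left _ _) (am_le i)) (x i j * v j)]
    _ = ∑ k ∈ Finset.range (n / 2 + 1), ((n / 2 + 1 : ℕ) : ℂ)⁻¹ •
          (if k < am n i then (x.mulVec fun j => if k < am n j then v j else 0) i else 0) := by
        rw [Finset.sum_comm]
        exact Finset.sum_congr rfl fun k _ => by rw [← Finset.smul_sum, hk k]

lemma schur_contract (κ : Matrix (Fin n) (Fin n) ℂ)
    (hκ : ∀ i j : Fin n, κ i j =
      ((min (min ((i : ℕ) + 1) ((j : ℕ) + 1)) (min (n - (i : ℕ)) (n - (j : ℕ))) : ℕ) : ℂ) /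
        ((n / 2 : ℕ) + 1 : ℕ))
    (x : Matrix (Fin n) (Fin n) A) :
    cstarMatrixNorm (Matrix.of fun i j => κ i j • x i j) ≤ cstarMatrixNorm x := by
  classical
  apply csInf_le_csInf
  · exact ⟨0, fun c hc => hc.1⟩
  · refine ⟨∑ i, ∑ j, ‖x i j‖,
      Finset.sum_nonneg fun _ _ => Finset.sum_nonneg fun _ _ => norm_nonneg _, fun v => ?_⟩
    calc vecNorm (x.mulVec v) ≤ ∑ i, ‖x.mulVec v i‖ := vecNorm_le_sum_norm _
      _ ≤ ∑ i, ∑ j, ‖x i j‖ * ‖v j‖ := by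
          refine Finset.sum_le_sum fun i _ => ?_
          rw [Matrix.mulVec, dotProduct]
          exact (norm_sum_le _ _).trans (Finset.sum_le_sum fun j _ => norm_mul_le _ _)
      _ ≤ ∑ i, ∑ j, ‖x i j‖ * vecNorm v := by
          refine Finset.sum_le_sum fun i _ => Finset.sum_le_sum fun j _ => ?_
          exact mul_le_mul_of_nonneg_left (norm_apply_le_vecNorm v j) (norm_nonneg _)
      _ = (∑ i, ∑ j, ‖x i j‖) * vecNorm v := by
          rw [Finset.sum_mul]
          exact Finset.sum_congr rfl fun i _ => (Finset.sum_mul _ _ _).symm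
  · rintro c ⟨hc0, hc⟩
    refine ⟨hc0, fun v => ?_⟩
    rw [mulVec_schur_decomp κ hκ x v]
    have hone : ∀ k : ℕ,
        vecNorm (((n / 2 + 1 : ℕ) : ℂ)⁻¹ • fun i => if k < am n i then
          (x.mulVec fun j => if k < am n j then v j else 0) i else 0)
        ≤ ((n / 2 + 1 : ℕ) : ℝ)⁻¹ * (c * vecNorm v) := by
      intro k
      rw [vecNorm_smul, norm_inv, Complex.norm_natCast]
      refine mul_le_mul_of_nonneg_left ?_ (by positivity)
      refine le_trans (vecNorm_mask (fun i => k < am n i) _) ?_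
      refine le_trans (hc _) ?_
      exact mul_le_mul_of_nonneg_left (vecNorm_mask (fun j => k < am n j) v) hc0
    refine le_trans (vecNorm_sum_le _ _) ?_
    refine le_trans (Finset.sum_le_sum fun k _ => hone k) ?_
    rw [Finset.sum_const, Finset.card_range, nsmul_eq_mul]
    rw [show ((n / 2 + 1 : ℕ) : ℝ) * (((n / 2 + 1 : ℕ) : ℝ)⁻¹ * (c * vecNorm v)) =
      (((n / 2 + 1 : ℕ) : ℝ) * ((n / 2 + 1 : ℕ) : ℝ)⁻¹) * (c * vecNorm v) by ring]
    rw [mul_inv_cancel₀ (by positivity), one_mul]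

/-- Type synonym for matrices over the unitization, to carry a C*-norm. -/
def CSM (n : ℕ) (A : Type*) [NonUnitalCStarAlgebra A] : Type _ :=
  CStarMatrix (Fin n) (Fin n) (Unitization ℂ A)

namespace CSM

def ofM : Matrix (Fin n) (Fin n) (Unitization ℂ A) ≃ CSM n A := Equiv.refl _

noncomputable instance : CStarAlgebra (CSM n A) :=
  inferInstanceAs (CStarAlgebra (CStarMatrix (Fin n) (Fin n) (Unitization ℂ A)))

noncomputable instance : PartialOrder (CSM n A) := CStarAlgebra.spectralOrder _
noncomputable instance : StarOrderedRing (CSM n A) := CStarAlgebra.spectralOrderedRing _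

end CSM

section Positivity
open CSM

/-- `ofM` as an additive equivalence. -/
def ofMA : Matrix (Fin n) (Fin n) (Unitization ℂ A) ≃+ CSM n A :=
  { CSM.ofM with map_add' := fun _ _ => rfl }

lemma schur_positive (κ : Matrix (Fin n) (Fin n) ℂ)
    (hκ : ∀ i j : Fin n, κ i j =
      ((min (min ((i : ℕ) + 1) ((j : ℕ) + 1)) (min (n - (i : ℕ)) (n - (j : ℕ))) : ℕ) : ℂ) /
        ((n / 2 : ℕ) + 1 : ℕ))
    (y : Matrix (Fin n) (Fin n) A) :
    ∃ z : Matrix (Fin n) (Fin n) A,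
      (Matrix.of fun i j => κ i j • (star y * y) i j) = star z * z := by
  classical
  set x : Matrix (Fin n) (Fin n) A := star y * y with hx
  set γ : ℂ := (((Real.sqrt (n / 2 + 1 : ℕ))⁻¹ : ℝ) : ℂ) with hγ
  set p : CSM n A := ofMA (Matrix.of fun i j =>
    ((κ i j • x i j : A) : Unitization ℂ A)) with hp
  set w : ℕ → CSM n A := fun k => ofMA (Matrix.of fun l j =>
    γ • (if k < am n j then ((y l j : A) : Unitization ℂ A) else 0)) with hw
  have hγγ : star γ * γ = (((n / 2 + 1 : ℕ) : ℂ))⁻¹ := by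
    rw [hγ, Complex.star_def, Complex.conj_ofReal, ← Complex.ofReal_mul, ← mul_inv,
      Real.mul_self_sqrt (by positivity), Complex.ofReal_inv, Complex.ofReal_natCast]
  -- entries of `star (w k) * w k`
  have hwk : ∀ (k : ℕ) (i j : Fin n), ofMA.symm (star (w k) * w k) i j
      = (((n / 2 + 1 : ℕ) : ℂ))⁻¹ •
        (if k < min (am n i) (am n j) then ((x i j : A) : Unitization ℂ A) else 0) := by
    intro k i j
    have hentry : ofMA.symm (star (w k) * w k) i j
        = ∑ l, star (γ • (if k < am n i then ((y l i : A) : Unitization ℂ A) else 0)) *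
            (γ • (if k < am n j then ((y l j : A) : Unitization ℂ A) else 0)) := by
      rfl
    rw [hentry]
    have hterm : ∀ l : Fin n,
        star (γ • (if k < am n i then ((y l i : A) : Unitization ℂ A) else 0)) *
            (γ • (if k < am n j then ((y l j : A) : Unitization ℂ A) else 0))
        = (((n / 2 + 1 : ℕ) : ℂ))⁻¹ • (if k < min (am n i) (am n j) then
            star ((y l i : A) : Unitization ℂ A) * ((y l j : A) : Unitization ℂ A) else 0) := by
      intro l
      rw [star_smul, smul_mul_smul_comm, hγγ]
      congr 1
      by_cases h1 : k < am n i <;> by_cases h2 : k < am n j <;>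
        simp [h1, h2, lt_min_iff]
    rw [Finset.sum_congr rfl fun l _ => hterm l, ← Finset.smul_sum]
    congr 1
    by_cases hm : k < min (am n i) (am n j)
    · rw [if_pos hm, Finset.sum_congr rfl fun l _ => if_pos hm]
      have : ∀ l : Fin n, star ((y l i : A) : Unitization ℂ A) * ((y l j : A) : Unitization ℂ A)
          = (((star (y l i) * y l j : A)) : Unitization ℂ A) := fun l => by
        rw [Unitization.inr_mul, Unitization.inr_star]
      rw [Finset.sum_congr rfl fun l _ => this l, ← inr_sum]
      congr 1
    · rw [if_neg hm, Finset.sum_congr rfl fun l _ => if_neg hm, Finset.sum_const,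
        smul_zero]
  -- the sum identity
  have hsum : ∑ k ∈ Finset.range (n / 2 + 1), star (w k) * w k = p := by
    apply ofMA.symm.injective
    refine Matrix.ext fun i j => ?_
    rw [map_sum]
    have : ∀ k ∈ Finset.range (n / 2 + 1), ofMA.symm (star (w k) * w k) i j
        = (((n / 2 + 1 : ℕ) : ℂ))⁻¹ •
          (if k < min (am n i) (am n j) then ((x i j : A) : Unitization ℂ A) else 0) :=
      fun k _ => hwk k i j
    rw [Matrix.sum_apply, Finset.sum_congr rfl this, ← Finset.smul_sum,
      sum_ite_count (le_trans (min_le_left _ _) (am_le i)) _]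
    have hps : ofMA.symm p i j = ((κ i j • x i j : A) : Unitization ℂ A) := rfl
    rw [hps, hκ i j]
    have hmin : min (min ((i : ℕ) + 1) ((j : ℕ) + 1)) (min (n - (i : ℕ)) (n - (j : ℕ)))
        = min (am n i) (am n j) := by unfold am; omega
    rw [hmin, Unitization.inr_smul, div_eq_inv_mul, mul_smul, Nat.cast_smul_eq_nsmul]
  have hp0 : (0 : CSM n A) ≤ p := by
    rw [← hsum]
    exact Finset.sum_nonneg fun k _ => star_mul_self_nonneg (w k)
  -- the square root
  set z₀ : CSM n A := CFC.sqrt p with hz₀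
  have hz₀sq : star z₀ * z₀ = p := by
    rw [hz₀, (IsSelfAdjoint.of_nonneg (CFC.sqrt_nonneg p)).star_eq]
    exact CFC.sqrt_mul_sqrt_self p hp0
  set Z : Matrix (Fin n) (Fin n) (Unitization ℂ A) := ofMA.symm z₀ with hZ
  have hZentry : ∀ i j : Fin n, ofMA.symm (star z₀ * z₀) i j = ∑ l, star (Z l i) * Z l j := by
    intro i j
    rw [hZ]
    rfl
  -- scalar parts vanish
  have hfst : ∀ l i : Fin n, (Z l i).fst = 0 := by
    intro l i
    have h1 : (∑ l, star (Z l i) * Z l i) = ((κ i i • x i i : A) : Unitization ℂ A) := by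
      rw [← hZentry i i, hz₀sq]; rfl
    have h2 := congrArg (Unitization.fstHom ℂ A) h1
    rw [map_sum] at h2
    have h3 : ∀ l : Fin n, Unitization.fstHom ℂ A (star (Z l i) * Z l i)
        = (Complex.normSq ((Z l i).fst) : ℂ) := by
      intro l
      have : Unitization.fstHom ℂ A (star (Z l i) * Z l i)
          = star ((Z l i).fst) * (Z l i).fst := by
        rw [map_mul]
        congr 1
      rw [this, Complex.star_def, ← Complex.normSq_eq_conj_mul_self]
    have h4 : Unitization.fstHom ℂ A ((κ i i • x i i : A) : Unitization ℂ A) = 0 :=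
      Unitization.fst_inr ℂ (κ i i • x i i)
    rw [Finset.sum_congr rfl fun l _ => h3 l, h4] at h2
    have h5 : (((∑ l : Fin n, Complex.normSq ((Z l i).fst)) : ℝ) : ℂ) = 0 := by
      rw [Complex.ofReal_sum]; exact h2
    have h6 : (∑ l : Fin n, Complex.normSq ((Z l i).fst)) = 0 := by
      exact_mod_cast h5
    have h7 := (Finset.sum_eq_zero_iff_of_nonneg
      (fun l _ => Complex.normSq_nonneg ((Z l i).fst))).mp h6 l (Finset.mem_univ l)
    exact Complex.normSq_eq_zero.mp h7
  have hZinr : ∀ l i : Fin n, (((Z l i).snd : A) : Unitization ℂ A) = Z l i := by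
    intro l i
    conv_rhs => rw [← Unitization.inl_fst_add_inr_snd_eq (Z l i)]
    rw [hfst l i, Unitization.inl_zero, zero_add]
  refine ⟨Matrix.of fun l j => (Z l j).snd, ?_⟩
  refine Matrix.ext fun i j => ?_
  apply Unitization.inr_injective (R := ℂ)
  calc ((Matrix.of (fun i j => κ i j • x i j) i j : A) : Unitization ℂ A)
      = ofMA.symm p i j := rfl
    _ = ofMA.symm (star z₀ * z₀) i j := by rw [hz₀sq]
    _ = ∑ l, star (Z l i) * Z l j := hZentry i j
    _ = ∑ l, star ((((Z l i).snd : A) : Unitization ℂ A)) * (((Z l j).snd : A) : Unitization ℂ A) := by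
        refine Finset.sum_congr rfl fun l _ => ?_
        rw [hZinr l i, hZinr l j]
    _ = ∑ l, (((star ((Z l i).snd) * (Z l j).snd : A)) : Unitization ℂ A) := by
        refine Finset.sum_congr rfl fun l _ => ?_
        rw [Unitization.inr_mul, Unitization.inr_star]
    _ = (((star (Matrix.of fun l j => (Z l j).snd) * (Matrix.of fun l j => (Z l j).snd)) i j : A) :
          Unitization ℂ A) := by
        rw [← inr_sum]
        congr 1

end Positivity

end SchurKappaAux

/-- For `n ≥ 2` and `m = ⌊n / 2⌋`, let `κₙ` be the `n × n` matrix with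
(`1`-based) entries `min (i, j, n+1-i, n+1-j) / (m + 1)`; in `0`-based indexing the `(i, j)`
entry is `min (i+1, j+1, n-i, n-j) / (m+1)`.  For every C*-algebra `A`, Schur multiplication
by `κₙ` on `Mₙ(A)` is positive (it maps positive elements, i.e. elements of the form
`star y * y`, to positive elements) and contractive for the C*-norm. -/
theorem schur_mult_kappa_pos_and_contractive
    {A : Type*} [NonUnitalCStarAlgebra A] {n : ℕ} (hn : 2 ≤ n)
    (κ : Matrix (Fin n) (Fin n) ℂ)
    (hκ : ∀ i j : Fin n, κ i j =
      ((min (min ((i : ℕ) + 1) ((j : ℕ) + 1)) (min (n - (i : ℕ)) (n - (j : ℕ))) : ℕ) : ℂ) /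
        ((n / 2 : ℕ) + 1 : ℕ)) :
    (∀ x : Matrix (Fin n) (Fin n) A, (∃ y, x = star y * y) →
      ∃ z, (Matrix.of fun i j => κ i j • x i j) = star z * z) ∧
    (∀ x : Matrix (Fin n) (Fin n) A,
      cstarMatrixNorm (Matrix.of fun i j => κ i j • x i j) ≤ cstarMatrixNorm x) := by
  constructor
  · rintro x ⟨y, rfl⟩
    exact SchurKappaAux.schur_positive κ hκ y
  · intro x
    exact SchurKappaAux.schur_contract κ hκ x
end
end
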